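/- Let p, m, p_C, m_C be natural numbers, E11 ∈ ℂ^{p_C×m_C}, E12 ∈ ℂ^{p_C×p}, E21 ∈ ℂ^{m×m_C}, E22 ∈ ℂ^{m×p}, Σ ∈ ℂ^{p×m} with I − E22·Σ invertible, and set M = Σ·(I − E22·Σ)⁻¹, N̄11 = [[M, I, M],[I, 0, 0],[M, 0, M]], N̄12 = [M·E21; E21; M·E21], N̄21 = [E12·M, E12, E12·M], and N the 4×4-block matrix [[M, I, M, M·E21],[I, 0, 0, E21],[M, 0, M, M·E21],[E12·M, E12, E12·M, 0]]. Let V_E ∈ ℂ^{p×p}, W_E ∈ ℂ^{m×m}, V_F ∈ ℂ^{m×m}, W_F ∈ ℂ^{p×p}, V_Cw ∈ ℂ^{p_C×p_C}, W_Cw ∈ ℂ^{m_C×m_C} be invertible, and set V = diag(V_E, V_F, V_E, V_Cw) and W = diag(W_E, W_F, W_E, W_Cw). Suppose there exist a Hermitian positive definite S ∈ ℂ^{2×2} and d_F > 0 such that, with D_l = [[S₁₁·I_p, 0, S₁₂·I_p, 0],[0, d_F·I_m, 0, 0],[S₂₁·I_p, 0, S₂₂·I_p, 0],[0, 0, 0,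 I_{p_C}]] and D_r = [[S₁₁·I_m, 0, S₁₂·I_m, 0],[0, d_F·I_p, 0, 0],[S₂₁·I_m, 0, S₂₂·I_m, 0],[0, 0, 0, I_{m_C}]], the matrix D_l − (V·N·W)·D_r·(V·N·W)^H is positive definite. Then for all E_E ∈ ℂ^{m×p} and E_F ∈ ℂ^{p×m} with ‖W_E⁻¹·E_E·V_E⁻¹‖ ≤ 1 and ‖W_F⁻¹·E_F·V_F⁻¹‖ ≤ 1, writing Δ = diag(E_E, E_F, E_E), the matrix I − N̄11·Δ is invertible and the weighted closed-loop error satisfies ‖V_Cw·(N̄21·Δ·(I − N̄11·Δ)⁻¹·N̄12)·W_Cw‖ < 1. -/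

import Mathlib

open Matrix
open scoped ComplexOrder Matrix.Norms.L2Operator

set_option linter.unusedSectionVars false

namespace RobustAux

variable {ι κ : Type*} [Fintype ι] [Fintype κ] [DecidableEq ι] [DecidableEq κ]

/-- A plain vector viewed in `EuclideanSpace`. -/
noncomputable def evec (y : ι → ℂ) : EuclideanSpace ℂ ι := (WithLp.equiv 2 (ι → ℂ)).symm y

lemma norm_evec_mulVec_le (A : Matrix ι κ ℂ) (x : κ → ℂ) :
    ‖evec (A *ᵥ x)‖ ≤ ‖A‖ * ‖evec x‖ :=
  A.l2_opNorm_mulVec (evec x)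

lemma opNorm_le_of_mulVec (A : Matrix ι κ ℂ) {c : ℝ} (hc : 0 ≤ c)
    (h : ∀ x : κ → ℂ, ‖evec (A *ᵥ x)‖ ≤ c * ‖evec x‖) : ‖A‖ ≤ c := by
  rw [Matrix.l2_opNorm_def]
  exact ContinuousLinearMap.opNorm_le_bound _ hc fun x => h x

lemma dot_eq_inner (u x : ι → ℂ) : (inner ℂ (evec u) (evec x) : ℂ) = star u ⬝ᵥ x :=
  (EuclideanSpace.inner_toLp_toLp u x).trans (dotProduct_comm _ _)

lemma dot_self_eq (y : ι → ℂ) : star y ⬝ᵥ y = ((‖evec y‖ : ℝ) ^ 2 : ℂ) := by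
  have : (inner ℂ (evec y) (evec y) : ℂ) = star y ⬝ᵥ y :=
    (EuclideanSpace.inner_toLp_toLp y y).trans (dotProduct_comm _ _)
  rw [← this, inner_self_eq_norm_sq_to_K]
  norm_num

lemma quad_mul_conjTranspose (A : Matrix ι κ ℂ) (x : ι → ℂ) :
    star x ⬝ᵥ ((A * Aᴴ) *ᵥ x) = star (Aᴴ *ᵥ x) ⬝ᵥ (Aᴴ *ᵥ x) := by
  rw [← Matrix.mulVec_mulVec, Matrix.dotProduct_mulVec]
  congr 1
  rw [Matrix.star_mulVec, Matrix.conjTranspose_conjTranspose]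

lemma quad_sandwich (T : Matrix ι ι ℂ) (D : Matrix ι ι ℂ) (x : ι → ℂ) :
    star x ⬝ᵥ ((T * D * Tᴴ) *ᵥ x) = star (Tᴴ *ᵥ x) ⬝ᵥ (D *ᵥ (Tᴴ *ᵥ x)) := by
  calc star x ⬝ᵥ ((T * D * Tᴴ) *ᵥ x)
      = star x ⬝ᵥ (T *ᵥ ((D * Tᴴ) *ᵥ x)) := by
        rw [Matrix.mulVec_mulVec, Matrix.mul_assoc]
    _ = (star x ᵥ* T) ⬝ᵥ ((D * Tᴴ) *ᵥ x) := Matrix.dotProduct_mulVec _ _ _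
    _ = star (Tᴴ *ᵥ x) ⬝ᵥ (D *ᵥ (Tᴴ *ᵥ x)) := by
        rw [Matrix.star_mulVec, Matrix.conjTranspose_conjTranspose, Matrix.mulVec_mulVec]

/-- Norm bound implies `1 - A Aᴴ ⪰ 0`. -/
lemma one_sub_mul_conjTranspose_posSemidef (A : Matrix ι κ ℂ) (hA : ‖A‖ ≤ 1) :
    (1 - A * Aᴴ).PosSemidef := by
  refine Matrix.PosSemidef.of_dotProduct_mulVec_nonneg ?_ ?_
  · simp [Matrix.IsHermitian, Matrix.conjTranspose_sub, Matrix.conjTranspose_mul]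
  · intro x
    rw [Matrix.sub_mulVec, dotProduct_sub, Matrix.one_mulVec,
      quad_mul_conjTranspose, dot_self_eq, dot_self_eq, ← Complex.ofReal_pow,
      ← Complex.ofReal_pow, ← Complex.ofReal_sub]
    rw [Complex.zero_le_real, sub_nonneg]
    have h1 : ‖evec (Aᴴ *ᵥ x)‖ ≤ ‖evec x‖ := by
      calc ‖evec (Aᴴ *ᵥ x)‖ ≤ ‖Aᴴ‖ * ‖evec x‖ := norm_evec_mulVec_le _ _
      _ ≤ 1 * ‖evec x‖ := by
          apply mul_le_mul_of_nonneg_right _ (norm_nonneg _)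
          rw [Matrix.l2_opNorm_conjTranspose]; exact hA
      _ = ‖evec x‖ := one_mul _
    exact pow_le_pow_left₀ (norm_nonneg _) h1 2

/-- If `D - T D Tᴴ ≻ 0` then `1 - T` is invertible. -/
lemma isUnit_one_sub_of_posDef {T D : Matrix ι ι ℂ} (h : (D - T * D * Tᴴ).PosDef) :
    IsUnit (1 - T) := by
  rw [Matrix.isUnit_iff_isUnit_det, isUnit_iff_ne_zero]
  intro hdet
  have hdet' : (1 - Tᴴ).det = 0 := by
    have : (1 - T)ᴴ.det = 0 := by rw [Matrix.det_conjTranspose, hdet, star_zero]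
    simpa [Matrix.conjTranspose_sub] using this
  obtain ⟨y, hy0, hy⟩ := Matrix.exists_mulVec_eq_zero_iff.mpr hdet'
  have hTy : Tᴴ *ᵥ y = y := by
    rwa [Matrix.sub_mulVec, Matrix.one_mulVec, sub_eq_zero, eq_comm] at hy
  have hq := h.dotProduct_mulVec_pos hy0
  rw [Matrix.sub_mulVec, dotProduct_sub, quad_sandwich, hTy, sub_self] at hq
  exact lt_irrefl _ hq

/-- Block diagonal of two PSD matrices is PSD. -/
lemma posSemidef_fromBlocks_diag {X : Matrix ι ι ℂ} {Y : Matrix κ κ ℂ}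
    (hX : X.PosSemidef) (hY : Y.PosSemidef) : (fromBlocks X 0 0 Y).PosSemidef := by
  refine Matrix.PosSemidef.of_dotProduct_mulVec_nonneg ?_ ?_
  · simp [Matrix.IsHermitian, Matrix.fromBlocks_conjTranspose, hX.1.eq, hY.1.eq]
  · intro x
    have hx : x = Sum.elim (x ∘ Sum.inl) (x ∘ Sum.inr) := (Sum.elim_comp_inl_inr x).symm
    rw [hx]
    have hstar : star (Sum.elim (x ∘ Sum.inl) (x ∘ Sum.inr)) =
        Sum.elim (star (x ∘ Sum.inl)) (star (x ∘ Sum.inr)) := by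
      funext i; cases i <;> rfl
    rw [Matrix.fromBlocks_mulVec, hstar, sumElim_dotProduct_sumElim]
    simp only [Matrix.zero_mulVec, add_zero, zero_add]
    exact add_nonneg (hX.dotProduct_mulVec_nonneg _) (hY.dotProduct_mulVec_nonneg _)

end RobustAux

namespace RobustAux2
open RobustAux

variable {n k n' k' : Type*} [Fintype n] [Fintype k] [Fintype n'] [Fintype k']
  [DecidableEq n] [DecidableEq k] [DecidableEq n'] [DecidableEq k']

/-- The structured scaling pattern built from a 2×2 matrix `s`, a scalar `d` and
matrices `P`, `Q`. -/
def patt (s : Matrix (Fin 2) (Fin 2) ℂ) (d : ℂ) (P : Matrix n n ℂ) (Q : Matrix k k ℂ) :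
    Matrix (n ⊕ (k ⊕ n)) (n ⊕ (k ⊕ n)) ℂ :=
  fromBlocks (s 0 0 • P) (fromCols 0 (s 0 1 • P)) (fromRows 0 (s 1 0 • P))
    (fromBlocks (d • Q) 0 0 (s 1 1 • P))

lemma patt_sub (s : Matrix (Fin 2) (Fin 2) ℂ) (d : ℂ) (P P' : Matrix n n ℂ)
    (Q Q' : Matrix k k ℂ) :
    patt s d P Q - patt s d P' Q' = patt s d (P - P') (Q - Q') := by
  ext i j
  rcases i with i | i <;> [skip; rcases i with i | i] <;> rcases j with j | j <;>
    [skip; rcases j with j | j; skip; rcases j with j | j; skip; rcases j with j | j] <;>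
    simp [patt, smul_sub, Matrix.sub_apply]

lemma patt_sandwich (s : Matrix (Fin 2) (Fin 2) ℂ) (d : ℂ)
    (A : Matrix n' n ℂ) (B : Matrix k' k ℂ) :
    (fromBlocks A 0 0 (fromBlocks B 0 0 A)) *
        patt s d (1 : Matrix n n ℂ) (1 : Matrix k k ℂ) *
        (fromBlocks A 0 0 (fromBlocks B 0 0 A))ᴴ = patt s d (A * Aᴴ) (B * Bᴴ) := by
  simp only [patt, Matrix.fromBlocks_conjTranspose, Matrix.conjTranspose_zero,
    Matrix.fromBlocks_multiply, Matrix.mul_fromCols, Matrix.fromRows_mul,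
    Matrix.fromBlocks_mul_fromRows, Matrix.fromCols_mul_fromBlocks,
    Matrix.mul_smul, Matrix.smul_mul, Matrix.mul_one, Matrix.one_mul,
    Matrix.mul_zero, Matrix.zero_mul, add_zero, zero_add, smul_zero,
    Matrix.fromCols_zero, Matrix.fromRows_zero, Matrix.mul_assoc]

lemma patt_base_posSemidef {s : Matrix (Fin 2) (Fin 2) ℂ} (hs : s.PosSemidef)
    {d : ℝ} (hd : 0 ≤ d) :
    (patt s (d : ℂ) (1 : Matrix n n ℂ) (1 : Matrix k k ℂ)).PosSemidef := by
  refine Matrix.PosSemidef.of_dotProduct_mulVec_nonneg ?_ ?_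
  · -- Hermitian
    have h00 : star (s 0 0) = s 0 0 := hs.1.apply 0 0
    have h01 : star (s 1 0) = s 0 1 := hs.1.apply 0 1
    have h10 : star (s 0 1) = s 1 0 := hs.1.apply 1 0
    have h11 : star (s 1 1) = s 1 1 := hs.1.apply 1 1
    ext i j
    rcases i with i | i <;> [skip; rcases i with i | i] <;> rcases j with j | j <;>
      [skip; rcases j with j | j; skip; rcases j with j | j; skip; rcases j with j | j] <;>
      simp [patt, Matrix.conjTranspose_apply, Matrix.one_apply, apply_ite,
        h00, h01, h10, h11, Complex.conj_ofReal, eq_comm] <;>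
      (try (split <;> intro hne <;> simp_all))
  · intro x
    have key : star x ⬝ᵥ (patt s (d : ℂ) (1 : Matrix n n ℂ) (1 : Matrix k k ℂ) *ᵥ x) =
        (∑ i : n, star ![x (Sum.inl i), x (Sum.inr (Sum.inr i))] ⬝ᵥ
            (s *ᵥ ![x (Sum.inl i), x (Sum.inr (Sum.inr i))])) +
          (d : ℂ) * ∑ j : k, star (x (Sum.inr (Sum.inl j))) * x (Sum.inr (Sum.inl j)) := by
      simp only [patt, dotProduct, Matrix.mulVec, Fintype.sum_sum_type,
        Matrix.fromBlocks_apply₁₁, Matrix.fromBlocks_apply₁₂, Matrix.fromBlocks_apply₂₁,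
        Matrix.fromBlocks_apply₂₂, Matrix.fromCols_apply_inl, Matrix.fromCols_apply_inr,
        Matrix.fromRows_apply_inl, Matrix.fromRows_apply_inr, Matrix.smul_apply,
        Matrix.one_apply, Matrix.zero_apply, smul_eq_mul, mul_ite, mul_zero, mul_one,
        ite_mul, zero_mul, Finset.sum_ite_eq, Finset.mem_univ, if_true, Pi.star_apply,
        Fin.sum_univ_two, Matrix.cons_val_zero, Matrix.cons_val_one, Matrix.head_cons,
        Finset.sum_const_zero, zero_add, add_zero, Finset.sum_add_distrib, Finset.mul_sum]
      ring_nf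
      have hA : (∑ i : n, (star (x (Sum.inl i)) * s 0 0 * x (Sum.inl i) +
          star (x (Sum.inl i)) * s 0 1 * x (Sum.inr (Sum.inr i)))) =
          ∑ i : n, star (x (Sum.inl i)) *
            (s 0 0 * x (Sum.inl i) + s 0 1 * x (Sum.inr (Sum.inr i))) :=
        Finset.sum_congr rfl fun i _ => by ring
      have hB : (∑ j : k, star (x (Sum.inr (Sum.inl j))) * (d : ℂ) * x (Sum.inr (Sum.inl j))) =
          ∑ j : k, (d : ℂ) * star (x (Sum.inr (Sum.inl j))) * x (Sum.inr (Sum.inl j)) :=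
        Finset.sum_congr rfl fun j _ => by ring
      rw [hA, hB]
      simp only [mul_add, Finset.sum_add_distrib, ← mul_assoc,
        mul_comm (star (x _)) (s _ _)]
      ring
    rw [key]
    have hterm : ∀ i : n, (0 : ℂ) ≤ star ![x (Sum.inl i), x (Sum.inr (Sum.inr i))] ⬝ᵥ
        (s *ᵥ ![x (Sum.inl i), x (Sum.inr (Sum.inr i))]) := fun i => hs.dotProduct_mulVec_nonneg _
    have h1 : (0 : ℂ) ≤ ∑ i : n, star ![x (Sum.inl i), x (Sum.inr (Sum.inr i))] ⬝ᵥ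
        (s *ᵥ ![x (Sum.inl i), x (Sum.inr (Sum.inr i))]) := Finset.sum_nonneg fun i _ => hterm i
    have h2 : (0 : ℂ) ≤ (d : ℂ) * ∑ j : k, star (x (Sum.inr (Sum.inl j))) * x (Sum.inr (Sum.inl j)) := by
      apply mul_nonneg (Complex.zero_le_real.mpr hd)
      exact Finset.sum_nonneg fun j _ => star_mul_self_nonneg _
    exact add_nonneg h1 h2

open scoped MatrixOrder in
lemma patt_posSemidef {s : Matrix (Fin 2) (Fin 2) ℂ} (hs : s.PosSemidef)
    {d : ℝ} (hd : 0 ≤ d) {P : Matrix n n ℂ} {Q : Matrix k k ℂ}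
    (hP : P.PosSemidef) (hQ : Q.PosSemidef) : (patt s (d : ℂ) P Q).PosSemidef := by
  have hbase := patt_base_posSemidef (n := n) (k := k) hs hd
  have := hbase.mul_mul_conjTranspose_same
    (fromBlocks (CFC.sqrt P) 0 0 (fromBlocks (CFC.sqrt Q) 0 0 (CFC.sqrt P)))
  rwa [patt_sandwich, (Matrix.nonneg_iff_posSemidef.mp (CFC.sqrt_nonneg P)).isHermitian.eq,
    CFC.sqrt_mul_sqrt_self P (Matrix.nonneg_iff_posSemidef.mpr hP),
    (Matrix.nonneg_iff_posSemidef.mp (CFC.sqrt_nonneg Q)).isHermitian.eq,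
    CFC.sqrt_mul_sqrt_self Q (Matrix.nonneg_iff_posSemidef.mpr hQ)] at this

end RobustAux2

namespace RobustAux3
open RobustAux

variable {ι κ : Type*} [Fintype ι] [Fintype κ] [DecidableEq ι] [DecidableEq κ]

lemma vecMulVec_mulVec (a : ι → ℂ) (b : κ → ℂ) (x : κ → ℂ) :
    Matrix.vecMulVec a b *ᵥ x = (b ⬝ᵥ x) • a := by
  funext i
  simp only [Matrix.mulVec, Matrix.vecMulVec_apply, dotProduct, Pi.smul_apply,
    smul_eq_mul, Finset.sum_mul]
  exact Finset.sum_congr rfl fun j _ => by ring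

lemma opNorm_eq_zero_of_isEmpty [IsEmpty κ] (A : Matrix ι κ ℂ) : ‖A‖ = 0 := by
  refine le_antisymm (opNorm_le_of_mulVec A le_rfl fun x => ?_) (norm_nonneg _)
  have h0 : A *ᵥ x = 0 := funext fun i => by
    simp [Matrix.mulVec, dotProduct]
  rw [h0, zero_mul]
  have : evec (0 : ι → ℂ) = 0 := rfl
  rw [this, norm_zero]

lemma exists_norm_mulVec_eq (A : Matrix ι κ ℂ) [Nonempty κ] :
    ∃ v : κ → ℂ, ‖evec v‖ = 1 ∧ ‖evec (A *ᵥ v)‖ = ‖A‖ := by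
  haveI : Nontrivial (EuclideanSpace ℂ κ) := by
    refine ⟨evec (fun _ => 1), 0, fun h => ?_⟩
    have h' : (fun _ => (1 : ℂ)) = (0 : κ → ℂ) :=
      (WithLp.equiv 2 (κ → ℂ)).symm.injective h
    have := congrFun h' (Classical.arbitrary κ)
    simp at this
  set T := (Matrix.toEuclideanLin.trans LinearMap.toContinuousLinearMap) A with hT
  have hTnorm : ‖A‖ = ‖T‖ := Matrix.l2_opNorm_def A
  have hsne : (Metric.sphere (0 : EuclideanSpace ℂ κ) 1).Nonempty :=
    NormedSpace.sphere_nonempty.mpr zero_le_one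
  have hscomp : IsCompact (Metric.sphere (0 : EuclideanSpace ℂ κ) 1) :=
    isCompact_sphere _ _
  have hcont : Continuous fun y : EuclideanSpace ℂ κ => ‖T y‖ := T.continuous.norm
  obtain ⟨v, hvmem, hvmax⟩ := hscomp.exists_isMaxOn hsne hcont.continuousOn
  have hvnorm : ‖v‖ = 1 := mem_sphere_zero_iff_norm.mp hvmem
  have hle : ‖T v‖ ≤ ‖T‖ := by
    calc ‖T v‖ ≤ ‖T‖ * ‖v‖ := T.le_opNorm v
    _ = ‖T‖ := by rw [hvnorm, mul_one]
  have hge : ‖T‖ ≤ ‖T v‖ := by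
    refine ContinuousLinearMap.opNorm_le_bound _ (norm_nonneg _) fun x => ?_
    rcases eq_or_ne x 0 with rfl | hx
    · simp
    · have hxn : (0 : ℝ) < ‖x‖ := norm_pos_iff.mpr hx
      have hy : (‖x‖⁻¹ • x) ∈ Metric.sphere (0 : EuclideanSpace ℂ κ) 1 := by
        rw [mem_sphere_zero_iff_norm, norm_smul, norm_inv, norm_norm,
          inv_mul_cancel₀ hxn.ne']
      have := hvmax hy
      simp only [Set.mem_setOf_eq] at this
      rw [T.map_smul_of_tower, norm_smul, norm_inv, norm_norm] at this
      calc ‖T x‖ = ‖x‖ * (‖x‖⁻¹ * ‖T x‖) := by field_simp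
      _ ≤ ‖x‖ * ‖T v‖ := by
          apply mul_le_mul_of_nonneg_left _ hxn.le
          exact this
      _ = ‖T v‖ * ‖x‖ := mul_comm _ _
  refine ⟨WithLp.equiv 2 (κ → ℂ) v, ?_, ?_⟩
  · have : evec (WithLp.equiv 2 (κ → ℂ) v) = v := (WithLp.equiv 2 (κ → ℂ)).symm_apply_apply v
    rw [this, hvnorm]
  · have hev : evec (A *ᵥ WithLp.equiv 2 (κ → ℂ) v) = T v := rfl
    rw [hev, hTnorm]
    exact le_antisymm hle hge

end RobustAux3

namespace RobustAux4
open RobustAux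

lemma evec_smul {ι : Type*} [Fintype ι] (c : ℂ) (y : ι → ℂ) :
    evec (c • y) = c • evec y := rfl

lemma fromBlocks_sub {l m n o : Type*} (A A' : Matrix n l ℂ) (B B' : Matrix n m ℂ)
    (C C' : Matrix o l ℂ) (D D' : Matrix o m ℂ) :
    fromBlocks A B C D - fromBlocks A' B' C' D' =
      fromBlocks (A - A') (B - B') (C - C') (D - D') := by
  ext i j
  rcases i with i | i <;> rcases j with j | j <;> simp [Matrix.sub_apply]

end RobustAux4

open RobustAux RobustAux2 RobustAux3 RobustAux4

/-- Performance conclusion of the frequency-pointwise robust performance corollary: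
if there are structured scalings `(D_l, D_r)` (built from a Hermitian positive definite
`S ∈ ℂ^{2×2}` and `d_F > 0`) such that `D_l − (V·N·W)·D_r·(V·N·W)^H ≻ 0`, then for all
abstraction errors `E_E` with `‖W_E⁻¹·E_E·V_E⁻¹‖ ≤ 1` and reduction errors `E_F` with
`‖W_F⁻¹·E_F·V_F⁻¹‖ ≤ 1`, writing `Δ = diag(E_E, E_F, E_E)`, the matrix `I − N̄11·Δ` is
invertible and the weighted closed-loop error satisfies
`‖V_Cw·(N̄21·Δ·(I − N̄11·Δ)⁻¹·N̄12)·W_Cw‖ < 1`. -/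
theorem robust_performance
    (p m pC mC : ℕ)
    (E11 : Matrix (Fin pC) (Fin mC) ℂ) (E12 : Matrix (Fin pC) (Fin p) ℂ)
    (E21 : Matrix (Fin m) (Fin mC) ℂ) (E22 : Matrix (Fin m) (Fin p) ℂ)
    (S : Matrix (Fin p) (Fin m) ℂ) (hS : IsUnit (1 - E22 * S))
    (M : Matrix (Fin p) (Fin m) ℂ) (hM : M = S * (1 - E22 * S)⁻¹)
    (N11 : Matrix (Fin p ⊕ (Fin m ⊕ Fin p)) (Fin m ⊕ (Fin p ⊕ Fin m)) ℂ)
    (hN11 : N11 = fromBlocks M (fromCols 1 M) (fromRows 1 M) (fromBlocks 0 0 0 M))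
    (N12 : Matrix (Fin p ⊕ (Fin m ⊕ Fin p)) (Fin mC) ℂ)
    (hN12 : N12 = fromRows (M * E21) (fromRows E21 (M * E21)))
    (N21 : Matrix (Fin pC) (Fin m ⊕ (Fin p ⊕ Fin m)) ℂ)
    (hN21 : N21 = fromCols (E12 * M) (fromCols E12 (E12 * M)))
    (N : Matrix ((Fin p ⊕ (Fin m ⊕ Fin p)) ⊕ Fin pC) ((Fin m ⊕ (Fin p ⊕ Fin m)) ⊕ Fin mC) ℂ)
    (hN : N = fromBlocks N11 N12 N21 0)
    (VE : Matrix (Fin p) (Fin p) ℂ) (WE : Matrix (Fin m) (Fin m) ℂ)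
    (VF : Matrix (Fin m) (Fin m) ℂ) (WF : Matrix (Fin p) (Fin p) ℂ)
    (VCw : Matrix (Fin pC) (Fin pC) ℂ) (WCw : Matrix (Fin mC) (Fin mC) ℂ)
    (hVE : IsUnit VE) (hWE : IsUnit WE) (hVF : IsUnit VF) (hWF : IsUnit WF)
    (hVCw : IsUnit VCw) (hWCw : IsUnit WCw)
    (V : Matrix ((Fin p ⊕ (Fin m ⊕ Fin p)) ⊕ Fin pC) ((Fin p ⊕ (Fin m ⊕ Fin p)) ⊕ Fin pC) ℂ)
    (hV : V = fromBlocks (fromBlocks VE 0 0 (fromBlocks VF 0 0 VE)) 0 0 VCw)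
    (W : Matrix ((Fin m ⊕ (Fin p ⊕ Fin m)) ⊕ Fin mC) ((Fin m ⊕ (Fin p ⊕ Fin m)) ⊕ Fin mC) ℂ)
    (hW : W = fromBlocks (fromBlocks WE 0 0 (fromBlocks WF 0 0 WE)) 0 0 WCw)
    (hscaling : ∃ (Ssc : Matrix (Fin 2) (Fin 2) ℂ) (dF : ℝ), Ssc.PosDef ∧ 0 < dF ∧
      ((fromBlocks
          (fromBlocks (Ssc 0 0 • 1) (fromCols 0 (Ssc 0 1 • 1))
            (fromRows 0 (Ssc 1 0 • 1)) (fromBlocks ((dF : ℂ) • 1) 0 0 (Ssc 1 1 • 1)))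
          0 0 (1 : Matrix (Fin pC) (Fin pC) ℂ)) -
        (V * N * W) *
          (fromBlocks
            (fromBlocks (Ssc 0 0 • 1) (fromCols 0 (Ssc 0 1 • 1))
              (fromRows 0 (Ssc 1 0 • 1)) (fromBlocks ((dF : ℂ) • 1) 0 0 (Ssc 1 1 • 1)))
            0 0 (1 : Matrix (Fin mC) (Fin mC) ℂ) :
            Matrix ((Fin m ⊕ (Fin p ⊕ Fin m)) ⊕ Fin mC) ((Fin m ⊕ (Fin p ⊕ Fin m)) ⊕ Fin mC) ℂ) *
          (V * N * W)ᴴ).PosDef) :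
    ∀ (EE : Matrix (Fin m) (Fin p) ℂ) (EF : Matrix (Fin p) (Fin m) ℂ),
      ‖WE⁻¹ * EE * VE⁻¹‖ ≤ 1 → ‖WF⁻¹ * EF * VF⁻¹‖ ≤ 1 →
      IsUnit (1 - N11 * fromBlocks EE 0 0 (fromBlocks EF 0 0 EE)) ∧
      ‖VCw * (N21 * fromBlocks EE 0 0 (fromBlocks EF 0 0 EE) *
        (1 - N11 * fromBlocks EE 0 0 (fromBlocks EF 0 0 EE))⁻¹ * N12) * WCw‖ < 1 := by
  intro EE EF hEE hEF
  classical
  obtain ⟨Ssc, dF, hSsc, hdF, hPD⟩ := hscaling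
  have hVEd : IsUnit VE.det := (Matrix.isUnit_iff_isUnit_det _).mp hVE
  have hWEd : IsUnit WE.det := (Matrix.isUnit_iff_isUnit_det _).mp hWE
  have hVFd : IsUnit VF.det := (Matrix.isUnit_iff_isUnit_det _).mp hVF
  have hWFd : IsUnit WF.det := (Matrix.isUnit_iff_isUnit_det _).mp hWF
  set A : Matrix (Fin m) (Fin p) ℂ := WE⁻¹ * EE * VE⁻¹ with hA
  set B : Matrix (Fin p) (Fin m) ℂ := WF⁻¹ * EF * VF⁻¹ with hB
  set Vb := fromBlocks VE 0 0 (fromBlocks VF 0 0 VE) with hVb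
  set Wb := fromBlocks WE 0 0 (fromBlocks WF 0 0 WE) with hWb
  set Dd := fromBlocks EE 0 0 (fromBlocks EF 0 0 EE) with hDd
  set Dh := fromBlocks A 0 0 (fromBlocks B 0 0 A) with hDh
  set NN := V * N * W with hNN
  set NN11 := Vb * (N11 * Wb) with hNN11
  set NN12 := Vb * (N12 * WCw) with hNN12
  set NN21 := VCw * (N21 * Wb) with hNN21
  have hNblocks : NN = fromBlocks NN11 NN12 NN21 0 := by
    rw [hNN, hV, hW, hN, hNN11, hNN12, hNN21]
    simp [Matrix.fromBlocks_multiply, Matrix.mul_assoc]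
  have e1 : WE * (A * VE) = EE := by
    rw [hA]
    simp only [Matrix.mul_assoc]
    rw [Matrix.nonsing_inv_mul _ hVEd, Matrix.mul_one,
      Matrix.mul_nonsing_inv_cancel_left _ _ hWEd]
  have e2 : WF * (B * VF) = EF := by
    rw [hB]
    simp only [Matrix.mul_assoc]
    rw [Matrix.nonsing_inv_mul _ hVFd, Matrix.mul_one,
      Matrix.mul_nonsing_inv_cancel_left _ _ hWFd]
  have hDd_eq : Dd = Wb * (Dh * Vb) := by
    rw [hDd, hDh, hWb, hVb]
    simp [Matrix.fromBlocks_multiply, Matrix.mul_assoc, e1, e2]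
  set Dl0 := RobustAux2.patt Ssc (dF : ℂ) (1 : Matrix (Fin p) (Fin p) ℂ)
    (1 : Matrix (Fin m) (Fin m) ℂ) with hDl0
  set Dr0 := RobustAux2.patt Ssc (dF : ℂ) (1 : Matrix (Fin m) (Fin m) ℂ)
    (1 : Matrix (Fin p) (Fin p) ℂ) with hDr0
  set Dl := fromBlocks Dl0 0 0 (1 : Matrix (Fin pC) (Fin pC) ℂ) with hDl
  set Dr := fromBlocks Dr0 0 0 (1 : Matrix (Fin mC) (Fin mC) ℂ) with hDr
  have hPD' : (Dl - NN * Dr * NNᴴ).PosDef := hPD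
  have hA1 : (1 - A * Aᴴ).PosSemidef := one_sub_mul_conjTranspose_posSemidef A hEE
  have hB1 : (1 - B * Bᴴ).PosSemidef := one_sub_mul_conjTranspose_posSemidef B hEF
  have hMid : (Dr0 - Dh * Dl0 * Dhᴴ).PosSemidef := by
    have hs1 : Dh * Dl0 * Dhᴴ = RobustAux2.patt Ssc (dF : ℂ) (A * Aᴴ) (B * Bᴴ) := by
      rw [hDh, hDl0]
      exact RobustAux2.patt_sandwich Ssc (dF : ℂ) A B
    rw [hs1, hDr0, RobustAux2.patt_sub]
    exact RobustAux2.patt_posSemidef hSsc.posSemidef hdF.le hA1 hB1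
  have main : ∀ Ξ : Matrix (Fin mC) (Fin pC) ℂ, (1 - Ξ * Ξᴴ).PosSemidef →
      IsUnit (1 - NN * fromBlocks Dh 0 0 Ξ) := by
    intro Ξ hΞ
    refine isUnit_one_sub_of_posDef (D := Dl) ?_
    have hcalc : (fromBlocks Dh 0 0 Ξ) * Dl * (fromBlocks Dh 0 0 Ξ)ᴴ =
        fromBlocks (Dh * Dl0 * Dhᴴ) 0 0 (Ξ * Ξᴴ) := by
      rw [hDl]
      simp [Matrix.fromBlocks_multiply, Matrix.fromBlocks_conjTranspose]
    have hsand : (Dr - (fromBlocks Dh 0 0 Ξ) * Dl * (fromBlocks Dh 0 0 Ξ)ᴴ).PosSemidef := by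
      rw [hcalc, hDr, RobustAux4.fromBlocks_sub]
      simp only [sub_zero]
      exact posSemidef_fromBlocks_diag hMid hΞ
    have halg : Dl - (NN * fromBlocks Dh 0 0 Ξ) * Dl * (NN * fromBlocks Dh 0 0 Ξ)ᴴ =
        (Dl - NN * Dr * NNᴴ) +
          NN * (Dr - (fromBlocks Dh 0 0 Ξ) * Dl * (fromBlocks Dh 0 0 Ξ)ᴴ) * NNᴴ := by
      simp only [Matrix.conjTranspose_mul, Matrix.mul_sub, Matrix.sub_mul, Matrix.mul_assoc]
      abel
    rw [halg]
    exact hPD'.add_posSemidef (hsand.mul_mul_conjTranspose_same NN)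
  set X := 1 - NN11 * Dh with hX
  have hU0 : IsUnit (1 - NN * fromBlocks Dh 0 0 (0 : Matrix (Fin mC) (Fin pC) ℂ)) := by
    refine main 0 ?_
    simp only [Matrix.conjTranspose_zero, Matrix.mul_zero, sub_zero]
    exact Matrix.PosSemidef.one
  have hprod0 : NN * fromBlocks Dh 0 0 (0 : Matrix (Fin mC) (Fin pC) ℂ) =
      fromBlocks (NN11 * Dh) 0 (NN21 * Dh) 0 := by
    rw [hNblocks]; simp [Matrix.fromBlocks_multiply]
  have hsplit0 : (1 : Matrix ((Fin p ⊕ (Fin m ⊕ Fin p)) ⊕ Fin pC) ((Fin p ⊕ (Fin m ⊕ Fin p)) ⊕ Fin pC) ℂ) -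
      fromBlocks (NN11 * Dh) 0 (NN21 * Dh) 0 = fromBlocks X 0 (-(NN21 * Dh)) 1 := by
    rw [← Matrix.fromBlocks_one, RobustAux4.fromBlocks_sub]
    rw [hX]
    simp
  have hXunit : IsUnit X := by
    rw [hprod0, hsplit0] at hU0
    rw [Matrix.isUnit_iff_isUnit_det, Matrix.det_fromBlocks_zero₁₂, Matrix.det_one,
      mul_one] at hU0
    rwa [Matrix.isUnit_iff_isUnit_det]
  have hXdet : IsUnit X.det := (Matrix.isUnit_iff_isUnit_det _).mp hXunit
  set Y := 1 - N11 * Dd with hY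
  have hdetYX : Y.det = X.det := by
    rw [hY, hX, hDd_eq]
    have h1 : N11 * (Wb * (Dh * Vb)) = (N11 * (Wb * Dh)) * Vb := by
      simp only [Matrix.mul_assoc]
    rw [h1, Matrix.det_one_sub_mul_comm]
    congr 2
    rw [hNN11]
    simp only [Matrix.mul_assoc]
  have hYunit : IsUnit Y := by
    rw [Matrix.isUnit_iff_isUnit_det, hdetYX]
    exact hXdet
  have hYdet : IsUnit Y.det := (Matrix.isUnit_iff_isUnit_det _).mp hYunit
  refine ⟨hYunit, ?_⟩
  have hXVb : X * Vb = Vb * Y := by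
    rw [hX, hY, hDd_eq, hNN11]
    simp only [Matrix.sub_mul, Matrix.mul_sub, Matrix.one_mul, Matrix.mul_one, Matrix.mul_assoc]
  have hcomm : Vb * Y⁻¹ = X⁻¹ * Vb := by
    calc Vb * Y⁻¹ = X⁻¹ * (X * (Vb * Y⁻¹)) :=
          (Matrix.nonsing_inv_mul_cancel_left _ _ hXdet).symm
    _ = X⁻¹ * ((X * Vb) * Y⁻¹) := by rw [Matrix.mul_assoc]
    _ = X⁻¹ * ((Vb * Y) * Y⁻¹) := by rw [hXVb]
    _ = X⁻¹ * Vb := by rw [Matrix.mul_nonsing_inv_cancel_right _ _ hYdet]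
  have hkey : Dd * Y⁻¹ = Wb * (Dh * (X⁻¹ * Vb)) := by
    rw [hDd_eq]
    simp only [Matrix.mul_assoc]
    rw [hcomm]
  set G := NN21 * (Dh * (X⁻¹ * NN12)) with hG
  have htrans : VCw * (N21 * Dd * Y⁻¹ * N12) * WCw = G := by
    rw [hG, hNN21, hNN12, Matrix.mul_assoc N21 Dd Y⁻¹, hkey]
    simp only [Matrix.mul_assoc]
  rw [htrans]
  by_contra hcon
  push_neg at hcon
  rcases isEmpty_or_nonempty (Fin mC) with hempty | hne
  · have h0 : ‖G‖ = 0 := opNorm_eq_zero_of_isEmpty G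
    rw [h0] at hcon
    linarith
  · obtain ⟨v, hv1, hvG⟩ := exists_norm_mulVec_eq G
    set σ := ‖G‖ with hσ
    have hσ1 : 1 ≤ σ := hcon
    have hσ0 : (0 : ℝ) < σ := lt_of_lt_of_le one_pos hσ1
    set u := G *ᵥ v with hu
    set c : ℂ := (((σ ^ 2)⁻¹ : ℝ) : ℂ) with hc
    set Ξ := c • Matrix.vecMulVec v (star u) with hΞ
    have hΞv : ∀ x : (Fin pC) → ℂ, Ξ *ᵥ x = c • ((star u ⬝ᵥ x) • v) := by
      intro x
      rw [hΞ, Matrix.smul_mulVec, RobustAux3.vecMulVec_mulVec]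
    have hcnorm : ‖c‖ = (σ ^ 2)⁻¹ := by
      rw [hc, Complex.norm_real, Real.norm_eq_abs,
        abs_of_nonneg (inv_nonneg.mpr (sq_nonneg σ))]
    have hΞnorm : ‖Ξ‖ ≤ 1 := by
      apply opNorm_le_of_mulVec Ξ zero_le_one
      intro x
      rw [hΞv x, evec_smul, evec_smul, norm_smul, norm_smul, hv1, mul_one]
      have hinner : ‖star u ⬝ᵥ x‖ ≤ σ * ‖evec x‖ := by
        have hCS := norm_inner_le_norm (𝕜 := ℂ) (evec u) (evec x)
        rw [dot_eq_inner, hvG] at hCS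
        exact hCS
      calc ‖c‖ * ‖star u ⬝ᵥ x‖ ≤ (σ ^ 2)⁻¹ * (σ * ‖evec x‖) := by
            rw [hcnorm]
            exact mul_le_mul_of_nonneg_left hinner (inv_nonneg.mpr (sq_nonneg σ))
      _ = σ⁻¹ * ‖evec x‖ := by
            field_simp
      _ ≤ 1 * ‖evec x‖ := by
            apply mul_le_mul_of_nonneg_right _ (norm_nonneg _)
            exact inv_le_one_of_one_le₀ hσ1
    have hUΞ := main Ξ (one_sub_mul_conjTranspose_posSemidef Ξ hΞnorm)
    have hΞu : Ξ *ᵥ u = v := by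
      rw [hΞv u, dot_self_eq u, hvG, smul_smul, hc]
      have hcc : (((σ ^ 2)⁻¹ : ℝ) : ℂ) * ((σ : ℂ)) ^ 2 = 1 := by
        push_cast
        field_simp
      rw [hcc, one_smul]
    have hv0 : v ≠ 0 := by
      intro h0
      rw [h0] at hv1
      have : evec (0 : Fin mC → ℂ) = 0 := rfl
      rw [this, norm_zero] at hv1
      norm_num at hv1
    have hdetΞG : (1 - Ξ * G).det = 0 := by
      apply Matrix.exists_mulVec_eq_zero_iff.mp
      refine ⟨v, hv0, ?_⟩
      rw [Matrix.sub_mulVec, Matrix.one_mulVec, ← Matrix.mulVec_mulVec, ← hu, hΞu, sub_self]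
    have hdetfull : (1 - NN * fromBlocks Dh 0 0 Ξ).det = 0 := by
      have hprodΞ : NN * fromBlocks Dh 0 0 Ξ =
          fromBlocks (NN11 * Dh) (NN12 * Ξ) (NN21 * Dh) 0 := by
        rw [hNblocks]; simp [Matrix.fromBlocks_multiply]
      have hsplitΞ : (1 : Matrix ((Fin p ⊕ (Fin m ⊕ Fin p)) ⊕ Fin pC) ((Fin p ⊕ (Fin m ⊕ Fin p)) ⊕ Fin pC) ℂ) -
          fromBlocks (NN11 * Dh) (NN12 * Ξ) (NN21 * Dh) 0 =
          fromBlocks X (-(NN12 * Ξ)) (-(NN21 * Dh)) 1 := by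
        rw [← Matrix.fromBlocks_one, RobustAux4.fromBlocks_sub, hX]
        simp
      rw [hprodΞ, hsplitΞ, Matrix.det_fromBlocks_one₂₂]
      have hfact : X - (-(NN12 * Ξ)) * (-(NN21 * Dh)) =
          X * (1 - X⁻¹ * (NN12 * Ξ * (NN21 * Dh))) := by
        rw [Matrix.neg_mul, Matrix.mul_neg, neg_neg, Matrix.mul_sub, Matrix.mul_one,
          Matrix.mul_nonsing_inv_cancel_left _ _ hXdet]
      rw [hfact, Matrix.det_mul]
      have hlast : (1 - X⁻¹ * (NN12 * Ξ * (NN21 * Dh))).det = (1 - Ξ * G).det := by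
        have h1 : X⁻¹ * (NN12 * Ξ * (NN21 * Dh)) = (X⁻¹ * NN12) * (Ξ * (NN21 * Dh)) := by
          simp only [Matrix.mul_assoc]
        rw [h1, Matrix.det_one_sub_mul_comm]
        congr 2
        rw [hG]
        simp only [Matrix.mul_assoc]
      rw [hlast, hdetΞG, mul_zero]
    rw [Matrix.isUnit_iff_isUnit_det, hdetfull] at hUΞ
    exact absurd hUΞ (by simp)
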